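/- Let n ≥ 3 be odd and not divisible by 3. Then the Latin square M_n = [[B_n, C_n],[D_n, B_n]] (with blocks defined by B_n(i,j) ≡ i-j (mod n) in {0,...,n-1}, C_n(i,j) ≡ i+j-2 (mod n) in {n,...,2n-1}, D_n(i,j) ≡ i+j-3 (mod n) in {n,...,2n-1}) contains no 2×2 Latin subsquare; that is, there do not exist two rows r1 ≠ r2 and two columns c1 ≠ c2 such that M_n(r1,c1) = M_n(r2,c2) and M_n(r1,c2) = M_n(r2,c1). -/
import Mathlib


/-- The `2n × 2n` array `M_n = [[B_n, C_n],[D_n, B_n]]` (0-based global row `r` and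
column `c`): `B_n(i,j) ≡ i - j (mod n)` with values in `{0,…,n-1}`,
`C_n(i,j) ≡ i + j - 2 (mod n)` with values in `{n,…,2n-1}`, and
`D_n(i,j) ≡ i + j - 3 (mod n)` with values in `{n,…,2n-1}`, where within each
block the indices `i,j` are 1-based. -/
def Mn (n r c : ℕ) : ℕ :=
  if r < n then
    (if c < n then (r + n - c) % n else n + (r + c) % n)
  else
    (if c < n then n + (r + c + n - 1) % n else (r + n - c) % n)

lemma no_cross {n a b : ℕ} (hn : 0 < n) (h : a % n = n + b % n) : False := by
  have hlt := Nat.mod_lt a hn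
  rw [h] at hlt
  exact absurd hlt (Nat.not_lt.2 (Nat.le_add_right n _))

lemma cast_of_mod {n a b : ℕ} (h : a % n = b % n) : (a : ZMod n) = b :=
  (ZMod.natCast_eq_natCast_iff a b n).2 h

lemma mod_of_cast {n a b : ℕ} (h : (a : ZMod n) = b) : a % n = b % n :=
  (ZMod.natCast_eq_natCast_iff a b n).1 h

lemma castB {n r c : ℕ} (h : c ≤ r + n) : ((r + n - c : ℕ) : ZMod n) = (r : ZMod n) - c := by
  rw [Nat.cast_sub h]
  push_cast
  rw [ZMod.natCast_self]
  ring

lemma castD {n r c : ℕ} (h : 1 ≤ r + c + n) :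
    ((r + c + n - 1 : ℕ) : ZMod n) = (r : ZMod n) + c - 1 := by
  rw [Nat.cast_sub h]
  push_cast
  rw [ZMod.natCast_self]
  ring

lemma colEq {n c1 c2 : ℕ} (hn : 0 < n) (hodd : Odd n)
    (h : ((2 * c1 : ℕ) : ZMod n) = ((2 * c2 : ℕ) : ZMod n))
    (hb1 : c1 < c2 + n) (hb2 : c2 < c1 + n) : c1 = c2 := by
  have hm : 2 * c1 % n = 2 * c2 % n := mod_of_cast h
  have hco : Nat.Coprime n 2 := hodd.coprime_two_right
  have hmc : c1 % n = c2 % n := Nat.ModEq.cancel_left_of_coprime hco hm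
  rcases Nat.le_total c1 c2 with hle | hle
  · have hd := (Nat.modEq_iff_dvd' hle).1 hmc
    rcases Nat.eq_zero_or_pos (c2 - c1) with h0 | hpos
    · omega
    · have := Nat.le_of_dvd hpos hd; omega
  · have hd := (Nat.modEq_iff_dvd' hle).1 hmc.symm
    rcases Nat.eq_zero_or_pos (c1 - c2) with h0 | hpos
    · omega
    · have := Nat.le_of_dvd hpos hd; omega

lemma contra1 {n : ℕ} (hn : 3 ≤ n) (h : (1 : ZMod n) = 0) : False := by
  haveI : Fact (1 < n) := ⟨by omega⟩
  exact one_ne_zero h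

/-- For `n ≥ 3` odd and not divisible by 3, the Latin square `M_n` contains no
`2 × 2` Latin subsquare. -/
theorem Mn_no_subsquare (n : ℕ) (hn3 : 3 ≤ n) (hodd : Odd n) (h3 : ¬ (3 ∣ n)) :
    ¬ ∃ r1 r2 c1 c2 : ℕ, r1 < 2 * n ∧ r2 < 2 * n ∧ c1 < 2 * n ∧ c2 < 2 * n ∧
      r1 ≠ r2 ∧ c1 ≠ c2 ∧ Mn n r1 c1 = Mn n r2 c2 ∧ Mn n r1 c2 = Mn n r2 c1 := by
  rintro ⟨r1, r2, c1, c2, hr1b, hr2b, hc1b, hc2b, hrne, hcne, h1, h2⟩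
  have hn : 0 < n := by omega
  rcases lt_or_ge r1 n with a1 | a1 <;> rcases lt_or_ge r2 n with a2 | a2 <;>
    rcases lt_or_ge c1 n with b1 | b1 <;> rcases lt_or_ge c2 n with b2 | b2
  -- 1: llll, block B
  · simp only [Mn, if_pos a1, if_pos a2, if_pos b1, if_pos b2] at h1 h2
    have E1 : (r1 : ZMod n) - c1 = (r2 : ZMod n) - c2 := by
      have := cast_of_mod h1
      rwa [castB (by omega), castB (by omega)] at this
    have E2 : (r1 : ZMod n) - c2 = (r2 : ZMod n) - c1 := by
      have := cast_of_mod h2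
      rwa [castB (by omega), castB (by omega)] at this
    have hc : ((2 * c1 : ℕ) : ZMod n) = ((2 * c2 : ℕ) : ZMod n) := by
      push_cast
      linear_combination E2 - E1
    exact hcne (colEq hn hodd hc (by omega) (by omega))
  -- 2: lllg, mismatch
  · simp only [Mn, if_pos a1, if_pos a2, if_pos b1, if_neg (Nat.not_lt.2 b2)] at h1
    exact no_cross hn h1
  -- 3: llgl, mismatch
  · simp only [Mn, if_pos a1, if_pos a2, if_neg (Nat.not_lt.2 b1), if_pos b2] at h1
    exact no_cross hn h1.symm
  -- 4: llgg, block C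
  · simp only [Mn, if_pos a1, if_pos a2, if_neg (Nat.not_lt.2 b1),
      if_neg (Nat.not_lt.2 b2)] at h1 h2
    have E1 : (r1 : ZMod n) + c1 = (r2 : ZMod n) + c2 := by
      have := cast_of_mod (Nat.add_left_cancel h1)
      push_cast at this
      exact this
    have E2 : (r1 : ZMod n) + c2 = (r2 : ZMod n) + c1 := by
      have := cast_of_mod (Nat.add_left_cancel h2)
      push_cast at this
      exact this
    have hc : ((2 * c1 : ℕ) : ZMod n) = ((2 * c2 : ℕ) : ZMod n) := by
      push_cast
      linear_combination E1 - E2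
    exact hcne (colEq hn hodd hc (by omega) (by omega))
  -- 5: lgll, mismatch
  · simp only [Mn, if_pos a1, if_neg (Nat.not_lt.2 a2), if_pos b1, if_pos b2] at h1
    exact no_cross hn h1
  -- 6: lglg, cross
  · simp only [Mn, if_pos a1, if_neg (Nat.not_lt.2 a2), if_pos b1,
      if_neg (Nat.not_lt.2 b2)] at h1 h2
    have E1 : (r1 : ZMod n) - c1 = (r2 : ZMod n) - c2 := by
      have := cast_of_mod h1
      rwa [castB (by omega), castB (by omega)] at this
    have E2 : (r1 : ZMod n) + c2 = (r2 : ZMod n) + c1 - 1 := by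
      have := cast_of_mod (Nat.add_left_cancel h2)
      rw [castD (by omega)] at this
      exact_mod_cast this
    refine contra1 hn3 ?_
    first
    | linear_combination E1 - E2
    | linear_combination E2 - E1
  -- 7: lggl, cross
  · simp only [Mn, if_pos a1, if_neg (Nat.not_lt.2 a2), if_neg (Nat.not_lt.2 b1),
      if_pos b2] at h1 h2
    have E1 : (r1 : ZMod n) + c1 = (r2 : ZMod n) + c2 - 1 := by
      have := cast_of_mod (Nat.add_left_cancel h1)
      rw [castD (by omega)] at this
      exact_mod_cast this
    have E2 : (r1 : ZMod n) - c2 = (r2 : ZMod n) - c1 := by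
      have := cast_of_mod h2
      rwa [castB (by omega), castB (by omega)] at this
    refine contra1 hn3 ?_
    first
    | linear_combination E1 - E2
    | linear_combination E2 - E1
  -- 8: lggg, mismatch
  · simp only [Mn, if_pos a1, if_neg (Nat.not_lt.2 a2), if_neg (Nat.not_lt.2 b1),
      if_neg (Nat.not_lt.2 b2)] at h1
    exact no_cross hn h1.symm
  -- 9: glll, mismatch
  · simp only [Mn, if_neg (Nat.not_lt.2 a1), if_pos a2, if_pos b1, if_pos b2] at h1
    exact no_cross hn h1.symm
  -- 10: gllg, cross
  · simp only [Mn, if_neg (Nat.not_lt.2 a1), if_pos a2, if_pos b1,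
      if_neg (Nat.not_lt.2 b2)] at h1 h2
    have E1 : (r1 : ZMod n) + c1 - 1 = (r2 : ZMod n) + c2 := by
      have := cast_of_mod (Nat.add_left_cancel h1)
      rw [castD (by omega)] at this
      exact_mod_cast this
    have E2 : (r1 : ZMod n) - c2 = (r2 : ZMod n) - c1 := by
      have := cast_of_mod h2
      rwa [castB (by omega), castB (by omega)] at this
    refine contra1 hn3 ?_
    first
    | linear_combination E1 - E2
    | linear_combination E2 - E1
  -- 11: glgl, cross
  · simp only [Mn, if_neg (Nat.not_lt.2 a1), if_pos a2, if_neg (Nat.not_lt.2 b1),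
      if_pos b2] at h1 h2
    have E1 : (r1 : ZMod n) - c1 = (r2 : ZMod n) - c2 := by
      have := cast_of_mod h1
      rwa [castB (by omega), castB (by omega)] at this
    have E2 : (r1 : ZMod n) + c2 - 1 = (r2 : ZMod n) + c1 := by
      have := cast_of_mod (Nat.add_left_cancel h2)
      rw [castD (by omega)] at this
      exact_mod_cast this
    refine contra1 hn3 ?_
    first
    | linear_combination E1 - E2
    | linear_combination E2 - E1
  -- 12: glgg, mismatch
  · simp only [Mn, if_neg (Nat.not_lt.2 a1), if_pos a2, if_neg (Nat.not_lt.2 b1),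
      if_neg (Nat.not_lt.2 b2)] at h1
    exact no_cross hn h1
  -- 13: ggll, block D
  · simp only [Mn, if_neg (Nat.not_lt.2 a1), if_neg (Nat.not_lt.2 a2), if_pos b1,
      if_pos b2] at h1 h2
    have E1 : (r1 : ZMod n) + c1 - 1 = (r2 : ZMod n) + c2 - 1 := by
      have := cast_of_mod (Nat.add_left_cancel h1)
      rwa [castD (by omega), castD (by omega)] at this
    have E2 : (r1 : ZMod n) + c2 - 1 = (r2 : ZMod n) + c1 - 1 := by
      have := cast_of_mod (Nat.add_left_cancel h2)
      rwa [castD (by omega), castD (by omega)] at this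
    have hc : ((2 * c1 : ℕ) : ZMod n) = ((2 * c2 : ℕ) : ZMod n) := by
      push_cast
      linear_combination E1 - E2
    exact hcne (colEq hn hodd hc (by omega) (by omega))
  -- 14: gglg, mismatch
  · simp only [Mn, if_neg (Nat.not_lt.2 a1), if_neg (Nat.not_lt.2 a2), if_pos b1,
      if_neg (Nat.not_lt.2 b2)] at h1
    exact no_cross hn h1.symm
  -- 15: gggl, mismatch
  · simp only [Mn, if_neg (Nat.not_lt.2 a1), if_neg (Nat.not_lt.2 a2),
      if_neg (Nat.not_lt.2 b1), if_pos b2] at h1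
    exact no_cross hn h1
  -- 16: gggg, block B
  · simp only [Mn, if_neg (Nat.not_lt.2 a1), if_neg (Nat.not_lt.2 a2),
      if_neg (Nat.not_lt.2 b1), if_neg (Nat.not_lt.2 b2)] at h1 h2
    have E1 : (r1 : ZMod n) - c1 = (r2 : ZMod n) - c2 := by
      have := cast_of_mod h1
      rwa [castB (by omega), castB (by omega)] at this
    have E2 : (r1 : ZMod n) - c2 = (r2 : ZMod n) - c1 := by
      have := cast_of_mod h2
      rwa [castB (by omega), castB (by omega)] at this
    have hc : ((2 * c1 : ℕ) : ZMod n) = ((2 * c2 : ℕ) : ZMod n) := by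
      push_cast
      linear_combination E2 - E1
    exact hcne (colEq hn hodd hc (by omega) (by omega))
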